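/- Let H be a quasi-shuffle algebra on a graded alphabet G over a ring R, with quasi-shuffle product defined by ε * w = w * ε = w and aw * bv = a(w * bv) + b(aw * v) − [a,b](w * v), where [·,·]: Ḡ × Ḡ → Ḡ satisfies [a,0] = 0, [a,b] = [b,a], [[a,b],c] = [a,[b,c]], and |[a,b]| = |a|+|b| or [a,b] = 0. Then the quasi-shuffle product * is commutative and associative on R⟨G⟩. -/

import Mathlib

section QuasiShuffle

variable {G : Type*} {R : Type*} [CommRing R]

/-- Prepend a letter to every word of a formal linear combination of words. -/
noncomputable def consMap (a : G) (m : List G →₀ R) : List G →₀ R :=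
  m.mapDomain (a :: ·)

/-- The quasi-shuffle product of two words, as an element of the free module
`R⟨G⟩` on the words: `ε * w = w * ε = w` and
`a u * b v = a (u * b v) + b (a u * v) - [a,b] (u * v)`. -/
noncomputable def qs (br : G → G → Option G) : List G → List G → (List G →₀ R)
  | [], w => Finsupp.single w 1
  | u, [] => Finsupp.single u 1
  | a :: u, b :: v =>
      consMap a (qs br u (b :: v)) + consMap b (qs br (a :: u) v) -
        (br a b).elim 0 fun c => consMap c (qs br u v)
termination_by u v => u.length + v.length
decreasing_by all_goals (simp [List.length_cons]; try omega)

/-- The bilinear extension of the quasi-shuffle product to `R⟨G⟩`. -/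
noncomputable def star (br : G → G → Option G) (f g : List G →₀ R) : List G →₀ R :=
  f.sum fun u cu => g.sum fun v cv => (cu * cv) • qs br u v

namespace QSAux
variable (br : G → G → Option G)

noncomputable def starL : (List G →₀ R) →ₗ[R] (List G →₀ R) →ₗ[R] (List G →₀ R) :=
  Finsupp.lift _ R _ fun u => Finsupp.lift _ R _ fun v => qs br u v

lemma starL_single_single (u v : List G) (c d : R) :
    starL br (Finsupp.single u c) (Finsupp.single v d) = (c * d) • qs br u v := by
  simp [starL, Finsupp.lift_apply, Finsupp.sum_single_index, mul_smul]

lemma star_eq (f g : List G →₀ R) : _root_.star br f g = starL br f g := by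
  simp only [_root_.star, starL, Finset.smul_sum, Finsupp.lift_apply, Finsupp.sum,
    LinearMap.coe_sum, Finset.sum_apply, LinearMap.smul_apply, Finsupp.smul_sum, smul_smul]

noncomputable def consL (a : G) : (List G →₀ R) →ₗ[R] (List G →₀ R) :=
  Finsupp.lmapDomain R R (a :: ·)

lemma consMap_eq (a : G) (m : List G →₀ R) : consMap a m = consL a m := rfl

noncomputable def D : Option G → (List G →₀ R) →ₗ[R] (List G →₀ R)
  | none => 0
  | some d => consL d

lemma D_eq (o : Option G) (m : List G →₀ R) :
    (o.elim 0 fun c => consMap c m) = D o m := by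
  cases o <;> simp [D, consMap_eq]

@[simp] lemma D_none : (D none : (List G →₀ R) →ₗ[R] (List G →₀ R)) = 0 := rfl
@[simp] lemma D_some (d : G) : (D (some d) : (List G →₀ R) →ₗ[R] (List G →₀ R)) = consL d := rfl

lemma consL_single (a : G) (u : List G) (c : R) :
    consL a (Finsupp.single u c) = Finsupp.single (a :: u) c := by
  simp [consL, Finsupp.lmapDomain_apply, Finsupp.mapDomain_single]

lemma qs_nil_left (w : List G) : qs br [] w = (Finsupp.single w 1 : List G →₀ R) := by
  cases w <;> rw [qs]

lemma qs_nil_right (u : List G) : qs br u [] = (Finsupp.single u 1 : List G →₀ R) := by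
  cases u <;> (rw [qs]; try simp)

lemma qs_cons_cons (a b : G) (u v : List G) :
    qs br (a :: u) (b :: v) = (consL a (qs br u (b :: v)) + consL b (qs br (a :: u) v) -
      D (br a b) (qs br u v) : List G →₀ R) := by
  rw [qs, D_eq, consMap_eq, consMap_eq]

lemma starL_sg_sg (u v : List G) :
    starL br (Finsupp.single u (1:R)) (Finsupp.single v (1:R)) = qs br u v := by
  simp [starL_single_single]

lemma starL_nil_left (m : List G →₀ R) : starL br (Finsupp.single [] (1:R)) m = m := by
  induction m using Finsupp.induction_linear with
  | zero => simp
  | add f g hf hg => simp [hf, hg]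
  | single v d => simp [starL_single_single, qs_nil_left, Finsupp.smul_single]

lemma starL_nil_right (m : List G →₀ R) : starL br m (Finsupp.single [] (1:R)) = m := by
  induction m using Finsupp.induction_linear with
  | zero => simp
  | add f g hf hg => simp [map_add, LinearMap.add_apply, hf, hg]
  | single v d => simp [starL_single_single, qs_nil_right, Finsupp.smul_single]

lemma starL_cons_cons (a c : G) (m n : List G →₀ R) :
    starL br (consL a m) (consL c n) =
      consL a (starL br m (consL c n)) + consL c (starL br (consL a m) n) -
        D (br a c) (starL br m n) := by
  induction m using Finsupp.induction_linear with
  | zero => simp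
  | add f g hf hg =>
      simp only [map_add, LinearMap.add_apply, hf, hg]; abel
  | single u x =>
    induction n using Finsupp.induction_linear with
    | zero => simp
    | add f g hf hg =>
        simp only [map_add, hf, hg]; abel
    | single v y =>
        simp only [consL_single, starL_single_single, qs_cons_cons]
        simp [smul_sub, smul_add, map_smul]

lemma qs_comm (hcomm : ∀ a b : G, br a b = br b a) :
    ∀ u v : List G, qs br u v = (qs br v u : List G →₀ R) := by
  suffices key : ∀ n (u v : List G), u.length + v.length = n →
      qs br u v = (qs br v u : List G →₀ R) from fun u v => key _ u v rfl
  intro n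
  induction n using Nat.strong_induction_on with
  | _ n ih =>
    intro u v hn
    match u, v with
    | [], v => rw [qs_nil_left, qs_nil_right]
    | u, [] => rw [qs_nil_left, qs_nil_right]
    | a :: u, b :: v =>
      rw [qs_cons_cons, qs_cons_cons, hcomm a b,
        ih (u.length + (b::v).length) (by simp at hn ⊢; omega) u (b::v) rfl,
        ih ((a::u).length + v.length) (by simp at hn ⊢; omega) (a::u) v rfl,
        ih (u.length + v.length) (by simp at hn ⊢; omega) u v rfl]
      abel
lemma qs_assoc_words (hassoc : ∀ a b c : G,
      (br a b).bind (fun d => br d c) = (br b c).bind (fun d => br a d)) :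
    ∀ u v w : List G,
      starL br (qs br u v) (Finsupp.single w (1:R)) =
        starL br (Finsupp.single u (1:R)) (qs br v w) := by
  suffices key : ∀ n (u v w : List G), u.length + v.length + w.length = n →
      starL br (qs br u v) (Finsupp.single w (1:R)) =
        starL br (Finsupp.single u (1:R)) (qs br v w) from fun u v w => key _ u v w rfl
  intro n
  induction n using Nat.strong_induction_on with
  | _ n ih =>
    intro u v w hn
    match u, v, w with
    | [], v, w => rw [qs_nil_left, starL_sg_sg, starL_nil_left]
    | u, [], w => rw [qs_nil_right, qs_nil_left]
    | u, v, [] => rw [qs_nil_right, starL_nil_right, starL_sg_sg]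
    | a :: u, b :: v, c :: w =>
      simp only [List.length_cons] at hn
      have len : ∀ (x y z : List G), x.length + y.length + z.length < n →
          starL br (qs br x y) (Finsupp.single z (1:R)) =
            starL br (Finsupp.single x (1:R)) (qs br y z) :=
        fun x y z h => ih _ h x y z rfl
      have e1 : starL br (qs br u (b::v)) (consL c (Finsupp.single w (1:R))) =
          starL br (Finsupp.single u (1:R)) (consL b (qs br v (c::w))) +
            starL br (Finsupp.single u (1:R)) (consL c (qs br (b::v) w)) -
            starL br (Finsupp.single u (1:R)) (D (br b c) (qs br v w)) := by
        rw [consL_single, len u (b::v) (c::w) (by first | omega | (simp only [List.length_cons]; omega)),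
          qs_cons_cons br b c]
        simp only [map_add, map_sub]
      have e2 : starL br (qs br (a::u) v) (consL c (Finsupp.single w (1:R))) =
          starL br (consL a (Finsupp.single u (1:R))) (qs br v (c::w)) := by
        rw [consL_single, len (a::u) v (c::w) (by first | omega | (simp only [List.length_cons]; omega)),
          show (Finsupp.single (a::u) (1:R)) = consL a (Finsupp.single u 1) from
            (consL_single a u 1).symm]
      have e3 : starL br (consL a (Finsupp.single u (1:R))) (qs br (b::v) w) =
          starL br (consL a (qs br u (b::v))) (Finsupp.single w (1:R)) +
            starL br (consL b (qs br (a::u) v)) (Finsupp.single w (1:R)) -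
            starL br (D (br a b) (qs br u v)) (Finsupp.single w (1:R)) := by
        rw [show consL a (Finsupp.single u (1:R)) = Finsupp.single (a::u) 1 from
            consL_single a u 1,
          ← len (a::u) (b::v) w (by first | omega | (simp only [List.length_cons]; omega)),
          qs_cons_cons br a b]
        simp only [map_add, map_sub, LinearMap.add_apply, LinearMap.sub_apply]
      have e4 : starL br (qs br u (b::v)) (Finsupp.single w (1:R)) =
          starL br (Finsupp.single u (1:R)) (qs br (b::v) w) :=
        len u (b::v) w (by first | omega | (simp only [List.length_cons]; omega))
      have e5 : starL br (qs br (a::u) v) (Finsupp.single w (1:R)) =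
          starL br (consL a (Finsupp.single u (1:R))) (qs br v w) := by
        rw [len (a::u) v w (by first | omega | (simp only [List.length_cons]; omega)),
          show (Finsupp.single (a::u) (1:R)) = consL a (Finsupp.single u 1) from
            (consL_single a u 1).symm]
      have e6 : starL br (qs br u v) (consL c (Finsupp.single w (1:R))) =
          starL br (Finsupp.single u (1:R)) (qs br v (c::w)) := by
        rw [consL_single]
        exact len u v (c::w) (by first | omega | (simp only [List.length_cons]; omega))
      have e7 : starL br (qs br u v) (Finsupp.single w (1:R)) =
          starL br (Finsupp.single u (1:R)) (qs br v w) :=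
        len u v w (by first | omega | (simp only [List.length_cons]; omega))
      rw [qs_cons_cons br a b, qs_cons_cons br b c,
        show (Finsupp.single (a::u) (1:R)) = consL a (Finsupp.single u 1) from
          (consL_single a u 1).symm,
        show (Finsupp.single (c::w) (1:R)) = consL c (Finsupp.single w 1) from
          (consL_single c w 1).symm]
      cases hab : br a b with
      | none =>
        cases hbc : br b c with
        | none =>
          simp only [hab, hbc, D_none, LinearMap.zero_apply, map_zero, map_add, map_sub,
            LinearMap.add_apply, LinearMap.sub_apply, starL_cons_cons br,
            e1, e2, e3, e4, e5, e6, e7]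
          abel
        | some e =>
          have hae : br a e = none := by
            have h := hassoc a b c; rw [hab, hbc] at h; simpa using h.symm
          simp only [hab, hbc, hae, D_none, D_some, LinearMap.zero_apply, map_zero,
            map_add, map_sub, LinearMap.add_apply, LinearMap.sub_apply, starL_cons_cons br,
            e1, e2, e3, e4, e5, e6, e7]
          abel
      | some d =>
        cases hbc : br b c with
        | none =>
          have hdc : br d c = none := by
            have h := hassoc a b c; rw [hab, hbc] at h; simpa using h
          simp only [hab, hbc, hdc, D_none, D_some, LinearMap.zero_apply, map_zero,
            map_add, map_sub, LinearMap.add_apply, LinearMap.sub_apply, starL_cons_cons br,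
            e1, e2, e3, e4, e5, e6, e7]
          abel
        | some e =>
          have hde : br d c = br a e := by
            have h := hassoc a b c; rw [hab, hbc] at h; simpa using h
          simp only [hab, hbc, hde, D_some, map_add, map_sub,
            LinearMap.add_apply, LinearMap.sub_apply, starL_cons_cons br,
            e1, e2, e3, e4, e5, e6, e7]
          abel
lemma starL_comm (hcomm : ∀ a b : G, br a b = br b a) (f g : List G →₀ R) :
    starL br f g = starL br g f := by
  induction f using Finsupp.induction_linear with
  | zero => simp
  | add f₁ f₂ h₁ h₂ => simp [map_add, LinearMap.add_apply, h₁, h₂]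
  | single u c =>
    induction g using Finsupp.induction_linear with
    | zero => simp
    | add g₁ g₂ h₁ h₂ => simp [map_add, LinearMap.add_apply, h₁, h₂]
    | single v d => rw [starL_single_single, starL_single_single, mul_comm,
        qs_comm br hcomm]

lemma starL_assoc (hassoc : ∀ a b c : G,
      (br a b).bind (fun d => br d c) = (br b c).bind (fun d => br a d))
    (f g h : List G →₀ R) :
    starL br (starL br f g) h = starL br f (starL br g h) := by
  induction f using Finsupp.induction_linear with
  | zero => simp
  | add f₁ f₂ h₁ h₂ => simp [map_add, LinearMap.add_apply, h₁, h₂]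
  | single u c =>
    induction g using Finsupp.induction_linear with
    | zero => simp
    | add g₁ g₂ h₁ h₂ => simp [map_add, LinearMap.add_apply, h₁, h₂]
    | single v d =>
      induction h using Finsupp.induction_linear with
      | zero => simp
      | add h₁ h₂ hh₁ hh₂ => simp [map_add, LinearMap.add_apply, hh₁, hh₂]
      | single w e =>
        have hu : (Finsupp.single u c : List G →₀ R) = c • Finsupp.single u 1 := by
          simp [Finsupp.smul_single]
        have hv : (Finsupp.single v d : List G →₀ R) = d • Finsupp.single v 1 := by
          simp [Finsupp.smul_single]
        have hw : (Finsupp.single w e : List G →₀ R) = e • Finsupp.single w 1 := by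
          simp [Finsupp.smul_single]
        rw [hu, hv, hw]
        simp only [map_smul, LinearMap.smul_apply, starL_sg_sg]
        rw [qs_assoc_words br hassoc u v w]
end QSAux

/-- Hoffman's theorem: if the bracket `[·,·] : Ḡ × Ḡ → Ḡ` (with `Ḡ = G ∪ {0}`
modelled by `Option G`) is commutative, associative and compatible with the
grading, then the quasi-shuffle product is commutative and associative on `R⟨G⟩`. -/
theorem quasiShuffle_comm_assoc [Algebra ℚ R]
    (deg : G → ℕ) (br : G → G → Option G)
    (hcomm : ∀ a b : G, br a b = br b a)
    (hassoc : ∀ a b c : G,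
      (br a b).bind (fun d => br d c) = (br b c).bind (fun d => br a d))
    (hgrade : ∀ a b c : G, br a b = some c → deg c = deg a + deg b) :
    (∀ f g : List G →₀ R, star br f g = star br g f) ∧
    (∀ f g h : List G →₀ R, star br (star br f g) h = star br f (star br g h)) := by
  constructor
  · intro f g
    simp only [QSAux.star_eq]
    exact QSAux.starL_comm br hcomm f g
  · intro f g h
    simp only [QSAux.star_eq]
    exact QSAux.starL_assoc br hassoc f g h

end QuasiShuffle
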